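/- Let K be a field of characteristic ≠ 2 and ζ ∈ K with ζ⁴ = 1. Let B be a K-algebra containing elements x, y with x⁴ = 1, xy = yx³, and y² = (1/2)(ζ + x − ζx² + x³). Then y⁴ = 1 if ζ² = 1, and y⁴ = x² if ζ² = −1. -/
import Mathlib

theorem stmt_11 {K : Type*} [Field K] (hchar : ringChar K ≠ 2)
    (ζ : K) (hζ : ζ ^ 4 = 1)
    {B : Type*} [Ring B] [Algebra K B] (x y : B)
    (hx : x ^ 4 = 1) (hxy : x * y = y * x ^ 3)
    (hy : y ^ 2 = (2 : K)⁻¹ • (ζ • (1 : B) + x - ζ • x ^ 2 + x ^ 3)) :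
    (ζ ^ 2 = 1 → y ^ 4 = 1) ∧ (ζ ^ 2 = -1 → y ^ 4 = x ^ 2) := by
  have h2 : (2 : K) ≠ 0 := by
    simpa using Ring.two_ne_zero (by simpa [ringChar.eq_iff] using hchar)
  have hx5 : x ^ 5 = x := by
    calc x ^ 5 = x ^ 4 * x := by noncomm_ring
    _ = x := by rw [hx]; noncomm_ring
  have hx6 : x ^ 6 = x ^ 2 := by
    calc x ^ 6 = x ^ 4 * x ^ 2 := by noncomm_ring
    _ = x ^ 2 := by rw [hx]; noncomm_ring
  have key : y ^ 4 = ((2:K)⁻¹ * (2:K)⁻¹) •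
      ((2 + 2*ζ^2) • (1 : B) + (2 - 2*ζ^2) • x ^ 2) := by
    have : y ^ 4 = y ^ 2 * y ^ 2 := by noncomm_ring
    rw [this, hy]
    rw [smul_mul_smul_comm]
    congr 1
    simp only [add_mul, mul_add, sub_mul, mul_sub, smul_mul_assoc, mul_smul_comm,
      smul_smul, one_mul, mul_one]
    have e12 : x * x ^ 2 = x ^ 3 := by noncomm_ring
    have e21 : x ^ 2 * x = x ^ 3 := by noncomm_ring
    have e13 : x * x ^ 3 = x ^ 4 := by noncomm_ring
    have e31 : x ^ 3 * x = x ^ 4 := by noncomm_ring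
    have e23 : x ^ 2 * x ^ 3 = x ^ 5 := by noncomm_ring
    have e32 : x ^ 3 * x ^ 2 = x ^ 5 := by noncomm_ring
    have e22 : x ^ 2 * x ^ 2 = x ^ 4 := by noncomm_ring
    have e33 : x ^ 3 * x ^ 3 = x ^ 6 := by noncomm_ring
    have e11 : x * x = x ^ 2 := by noncomm_ring
    rw [e12, e21, e13, e31, e23, e32, e22, e33, e11, hx, hx5, hx6]
    module
  constructor
  · intro h1
    rw [key, h1]
    rw [show ((2:K) + 2*1) = 4 by norm_num, show ((2:K) - 2*1) = 0 by norm_num]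
    rw [zero_smul, add_zero, smul_smul]
    rw [show ((2:K)⁻¹ * 2⁻¹ * 4) = 1 by field_simp; ring]
    simp
  · intro h1
    rw [key, h1]
    rw [show ((2:K) + 2*(-1)) = 0 by norm_num, show ((2:K) - 2*(-1)) = 4 by norm_num]
    rw [zero_smul, zero_add, smul_smul]
    rw [show ((2:K)⁻¹ * 2⁻¹ * 4) = 1 by field_simp; ring]
    simp
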